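/- If n ≥ 11, then for every j with 1 ≤ j ≤ 2n−1 one has 3a_j − b_j < −7h²/16; in particular b_j > 3a_j + 7h²/16 > 0 and b_j / a_j > 3. -/

import Mathlib

/-- `λ_j = 4 sin²(jπ/(4n))`. -/
noncomputable def lamRR (n j : ℕ) : ℝ :=
  4 * Real.sin ((j : ℝ) * Real.pi / (4 * (n : ℝ))) ^ 2

/-- `λ̃_j = (2/(n+1)) Σ_{i=1}^n sin²(inπ/(n+1)) / (4 sin²(iπ/(2(n+1))) + λ_j)`. -/
noncomputable def lamTildeRR (n j : ℕ) : ℝ :=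
  (2 / ((n : ℝ) + 1)) * ∑ i ∈ Finset.Icc 1 n,
    Real.sin ((i : ℝ) * (n : ℝ) * Real.pi / ((n : ℝ) + 1)) ^ 2 /
      (4 * Real.sin ((i : ℝ) * Real.pi / (2 * ((n : ℝ) + 1))) ^ 2 + lamRR n j)

/-- `a_j = (h - (h/6)λ_j) λ̃_j` with `h = 1/(2n)`. -/
noncomputable def aRR (n j : ℕ) : ℝ :=
  (1 / (2 * (n : ℝ)) - (1 / (2 * (n : ℝ))) / 6 * lamRR n j) * lamTildeRR n j

/-- `b_j = 1 - (1 + λ_j/2) λ̃_j`. -/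
noncomputable def bRR (n j : ℕ) : ℝ :=
  1 - (1 + lamRR n j / 2) * lamTildeRR n j


open Real Finset

private lemma trig1 (a b : ℝ) :
    4 * Real.sin (b/2) ^ 2 * Real.sin a
      = 2 * Real.sin a - (Real.sin (a - b) + Real.sin (a + b)) := by
  have h : Real.sin (b/2) ^ 2 = 1/2 - Real.cos b/2 := by
    have := Real.sin_sq_eq_half_sub (b/2)
    rwa [show 2*(b/2) = b by ring] at this
  rw [h, Real.sin_sub, Real.sin_add]
  ring

private lemma sum_cos_odd (n m : ℕ) (hm : Odd m) :
    ∑ i ∈ Finset.Icc 1 n, Real.cos ((i:ℝ) * m * Real.pi / ((n:ℝ)+1)) = 0 := by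
  apply Finset.sum_involution (g := fun i _ => n + 1 - i)
  · intro i hi
    simp only [Finset.mem_Icc] at hi
    have h1 : (((n + 1 - i : ℕ) : ℝ)) = (n:ℝ) + 1 - i := by
      push_cast [Nat.cast_sub (by omega : i ≤ n + 1)]; ring
    rw [h1]
    have : ((n:ℝ) + 1 - i) * m * Real.pi / ((n:ℝ)+1)
        = (m:ℝ) * Real.pi - (i:ℝ) * m * Real.pi / ((n:ℝ)+1) := by
      have hn : ((n:ℝ)+1) ≠ 0 := by positivity
      field_simp
    rw [this, Real.cos_nat_mul_pi_sub]
    rcases hm with ⟨t, ht⟩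
    rw [ht]
    rw [pow_succ, pow_mul]
    simp
  · intro i hi hne
    -- g i ≠ i unless cos = 0
    intro hgi
    apply hne
    -- n + 1 - i = i  ⇒  angle = m*π/2, m odd ⇒ cos = 0
    have h2i : n + 1 = 2 * i := by omega
    have : (i:ℝ) * m * Real.pi / ((n:ℝ)+1) = (m:ℝ) * (Real.pi/2) := by
      have : ((n:ℝ)+1) = 2*(i:ℝ) := by exact_mod_cast congrArg (Nat.cast : ℕ → ℝ) h2i
      rw [this]
      have hi0 : (i:ℝ) ≠ 0 := by
        simp only [Finset.mem_Icc] at hi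
        exact Nat.cast_ne_zero.mpr (by omega)
      field_simp
    rw [this]
    rcases hm with ⟨t, ht⟩
    rw [ht]
    push_cast
    rw [show ((2*t+1 : ℝ)) * (Real.pi/2) = t*Real.pi + Real.pi/2 by ring]
    rw [Real.cos_add, Real.cos_pi_div_two, Real.sin_pi_div_two]
    simp [Real.sin_nat_mul_pi]
  · intro i hi
    simp only [Finset.mem_Icc] at *
    omega
  · intro i hi
    simp only [Finset.mem_Icc] at hi
    omega

private lemma sum_Icc_one (f : ℕ → ℝ) (n : ℕ) :
    ∑ i ∈ Finset.Icc 1 n, f i = ∑ i ∈ Finset.range n, f (i+1) := by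
  rw [← Finset.Ico_add_one_right_eq_Icc, Finset.sum_Ico_eq_sum_range]
  simp [add_comm]

private lemma sum_cos_even (n l : ℕ) (hl1 : 1 ≤ l) (hl2 : l ≤ n) :
    ∑ i ∈ Finset.Icc 1 n, Real.cos ((i:ℝ) * (2*l : ℕ) * Real.pi / ((n:ℝ)+1)) = -1 := by
  have hN : (0:ℝ) < (n:ℝ)+1 := by positivity
  have hNC : ((n:ℂ)+1) ≠ 0 := Nat.cast_add_one_ne_zero n
  set a : ℝ := 2 * Real.pi * l / ((n:ℝ)+1) with ha
  set z : ℂ := Complex.exp ((a:ℝ) * Complex.I) with hz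
  have hzne : z ≠ 1 := by
    intro hcontra
    rw [hz, Complex.exp_eq_one_iff] at hcontra
    obtain ⟨k, hk⟩ := hcontra
    rw [show (k:ℂ) * (2 * (Real.pi:ℂ) * Complex.I) = (((k:ℝ) * (2*Real.pi) : ℝ):ℂ) * Complex.I by
      push_cast; ring] at hk
    have h2 : a = (k:ℝ) * (2*Real.pi) := by
      have := mul_right_cancel₀ Complex.I_ne_zero hk
      exact_mod_cast this
    have hpi := Real.pi_pos
    have h3 : (l:ℝ) = (k:ℝ) * ((n:ℝ)+1) := by
      rw [ha] at h2
      field_simp at h2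
      nlinarith [h2]
    have h4 : (l:ℤ) = k * ((n:ℤ)+1) := by exact_mod_cast h3
    have hln : (l:ℤ) ≤ n := by exact_mod_cast hl2
    have hl1' : (1:ℤ) ≤ l := by exact_mod_cast hl1
    have hn0 : (0:ℤ) ≤ n := Int.ofNat_nonneg n
    have hdvd : ((n:ℤ)+1) ∣ (l:ℤ) := ⟨k, by linarith⟩
    have := Int.le_of_dvd (by omega) hdvd
    omega
  have hzN : z ^ (n+1) = 1 := by
    rw [← Complex.exp_nat_mul, Complex.exp_eq_one_iff]
    refine ⟨l, ?_⟩
    rw [ha]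
    push_cast
    field_simp
  have hgeom : ∑ i ∈ Finset.range (n+1), z ^ i = 0 := by
    rw [geom_sum_eq hzne (n+1), hzN]
    simp
  have hre : ∀ i : ℕ, (z ^ i).re = Real.cos ((i:ℝ) * a) := by
    intro i
    rw [← Complex.exp_nat_mul]
    rw [show (i:ℂ) * ((a:ℝ) * Complex.I) = (((i:ℝ) * a : ℝ):ℂ) * Complex.I by push_cast; ring]
    exact Complex.exp_ofReal_mul_I_re _
  have hsum0 : ∑ i ∈ Finset.range (n+1), Real.cos ((i:ℝ) * a) = 0 := by
    have := congrArg Complex.re hgeom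
    rw [Complex.re_sum] at this
    simpa [hre] using this
  have hstep : ∑ i ∈ Finset.Icc 1 n, Real.cos ((i:ℝ) * a)
      = ∑ i ∈ Finset.range (n+1), Real.cos ((i:ℝ) * a) - Real.cos 0 := by
    rw [Finset.sum_range_succ' (fun i => Real.cos ((i:ℝ) * a)) n,
      sum_Icc_one (fun i => Real.cos ((i:ℝ) * a)) n]
    simp
  have hfin : ∑ i ∈ Finset.Icc 1 n, Real.cos ((i:ℝ) * a) = -1 := by
    rw [hstep, hsum0, Real.cos_zero]; ring
  rw [← hfin]
  apply Finset.sum_congr rfl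
  intro i _
  congr 1
  rw [ha]
  push_cast
  field_simp

private lemma sum_cos_nat (n m : ℕ) (hm1 : 1 ≤ m) (hm2 : m ≤ 2*n) :
    ∑ i ∈ Finset.Icc 1 n, Real.cos ((i:ℝ) * m * Real.pi / ((n:ℝ)+1))
      = if Odd m then 0 else -1 := by
  rcases Nat.even_or_odd m with he | ho
  · obtain ⟨l, hl⟩ := he
    have h2l : m = 2 * l := by omega
    subst h2l
    rw [if_neg (by simp [Nat.odd_iff, Nat.mul_mod_right])]
    exact sum_cos_even n l (by omega) (by omega)
  · rw [if_pos ho]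
    exact sum_cos_odd n m ho

private lemma orth (n k : ℕ) (hn : 1 ≤ n) (hk1 : 1 ≤ k) (hk2 : k ≤ n) :
    ∑ i ∈ Finset.Icc 1 n,
        Real.sin ((i:ℝ)*(n:ℝ)*Real.pi/((n:ℝ)+1)) * Real.sin ((i:ℝ)*(k:ℝ)*Real.pi/((n:ℝ)+1))
      = if k = n then ((n:ℝ)+1)/2 else 0 := by
  have hN : ((n:ℝ)+1) ≠ 0 := by positivity
  have hterm : ∀ i ∈ Finset.Icc 1 n,
      Real.sin ((i:ℝ)*(n:ℝ)*Real.pi/((n:ℝ)+1)) * Real.sin ((i:ℝ)*(k:ℝ)*Real.pi/((n:ℝ)+1))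
        = (Real.cos ((i:ℝ)*((n - k : ℕ):ℝ)*Real.pi/((n:ℝ)+1))
            - Real.cos ((i:ℝ)*((n + k : ℕ):ℝ)*Real.pi/((n:ℝ)+1)))/2 := by
    intro i _
    have hc : ((n - k : ℕ):ℝ) = (n:ℝ) - (k:ℝ) := by
      push_cast [hk2]; ring
    have hc2 : ((n + k : ℕ):ℝ) = (n:ℝ) + (k:ℝ) := by push_cast; ring
    rw [hc, hc2, Real.cos_sub_cos]
    rw [show ((i:ℝ)*((n:ℝ)-(k:ℝ))*Real.pi/((n:ℝ)+1) + (i:ℝ)*((n:ℝ)+(k:ℝ))*Real.pi/((n:ℝ)+1))/2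
        = (i:ℝ)*(n:ℝ)*Real.pi/((n:ℝ)+1) by field_simp; ring]
    rw [show ((i:ℝ)*((n:ℝ)-(k:ℝ))*Real.pi/((n:ℝ)+1) - (i:ℝ)*((n:ℝ)+(k:ℝ))*Real.pi/((n:ℝ)+1))/2
        = -((i:ℝ)*(k:ℝ)*Real.pi/((n:ℝ)+1)) by field_simp; ring]
    rw [Real.sin_neg]
    ring
  rw [Finset.sum_congr rfl hterm]
  rw [← Finset.sum_div, Finset.sum_sub_distrib]
  by_cases hkn : k = n
  · subst hkn
    rw [if_pos rfl]
    have h0 : ∑ i ∈ Finset.Icc 1 k, Real.cos ((i:ℝ)*((k - k : ℕ):ℝ)*Real.pi/((k:ℝ)+1)) = (k:ℝ) := by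
      simp [Nat.sub_self]
    have h2 : ∑ i ∈ Finset.Icc 1 k, Real.cos ((i:ℝ)*((k + k : ℕ):ℝ)*Real.pi/((k:ℝ)+1)) = -1 := by
      have := sum_cos_nat k (k+k) (by omega) (by omega)
      rw [this]
      rw [if_neg (by simp [Nat.odd_iff, Nat.add_mod]; omega)]
    rw [h0, h2]
    ring
  · rw [if_neg hkn]
    have hlt : k < n := lt_of_le_of_ne hk2 hkn
    have h1 := sum_cos_nat n (n - k) (by omega) (by omega)
    have h2 := sum_cos_nat n (n + k) (by omega) (by omega)
    have hpar : Odd (n - k) ↔ Odd (n + k) := by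
      simp [Nat.odd_iff]
      omega
    rw [h1, h2]
    by_cases ho : Odd (n - k)
    · rw [if_pos ho, if_pos (hpar.mp ho)]
      ring
    · rw [if_neg ho, if_neg (fun hc => ho (hpar.mpr hc))]
      ring

noncomputable def wseq (r : ℝ) (k : ℕ) : ℝ := r^k - (r⁻¹)^k

noncomputable def psi (n i k : ℕ) : ℝ := Real.sin ((i:ℝ)*(k:ℝ)*Real.pi/((n:ℝ)+1))

lemma wseq_rec (r lam : ℝ) (hr0 : r ≠ 0) (hrr : r + r⁻¹ = 2 + lam) (j : ℕ) :
    (2+lam) * wseq r (j+1) = wseq r (j+2) + wseq r j := by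
  unfold wseq
  rw [← hrr]
  linear_combination (r^j - r⁻¹^j) * (mul_inv_cancel₀ hr0)

lemma psi_rec (n i j : ℕ) :
    4*Real.sin ((i:ℝ)*Real.pi/(2*((n:ℝ)+1)))^2 * psi n i (j+1)
      = 2*psi n i (j+1) - (psi n i j + psi n i (j+2)) := by
  have h := trig1 ((i:ℝ)*((j:ℝ)+1)*Real.pi/((n:ℝ)+1)) ((i:ℝ)*Real.pi/((n:ℝ)+1))
  have e0 : ((i:ℝ)*Real.pi/((n:ℝ)+1))/2 = (i:ℝ)*Real.pi/(2*((n:ℝ)+1)) := by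
    rw [div_div, mul_comm ((n:ℝ)+1) 2]
  have e1 : (i:ℝ)*((j:ℝ)+1)*Real.pi/((n:ℝ)+1) - (i:ℝ)*Real.pi/((n:ℝ)+1)
      = (i:ℝ)*(j:ℝ)*Real.pi/((n:ℝ)+1) := by ring
  have e2 : (i:ℝ)*((j:ℝ)+1)*Real.pi/((n:ℝ)+1) + (i:ℝ)*Real.pi/((n:ℝ)+1)
      = (i:ℝ)*((j:ℝ)+2)*Real.pi/((n:ℝ)+1) := by ring
  rw [e0, e1, e2] at h
  unfold psi
  push_cast
  exact h

lemma key_sum (n : ℕ) (hn : 1 ≤ n) (lam r : ℝ) (hr : 1 < r) (hrr : r + r⁻¹ = 2 + lam)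
    (i : ℕ) :
    (4*Real.sin ((i:ℝ)*Real.pi/(2*((n:ℝ)+1)))^2 + lam)
        * ∑ k ∈ Finset.range n, wseq r (k+1) * psi n i (k+1)
      = wseq r (n+1) * psi n i n := by
  have hr0 : r ≠ 0 := by positivity
  set μ : ℝ := 4*Real.sin ((i:ℝ)*Real.pi/(2*((n:ℝ)+1)))^2 with hμ
  set W : ℕ → ℝ := fun k => wseq r (k+1) * psi n i k - wseq r k * psi n i (k+1) with hW
  have htel : ∀ j ∈ Finset.range n,
      (μ + lam) * (wseq r (j+1) * psi n i (j+1)) = W (j+1) - W j := by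
    intro j _
    have h1 := psi_rec n i j
    have h2 := wseq_rec r lam hr0 hrr j
    simp only [hW, hμ]
    linear_combination (wseq r (j+1)) * h1 + (psi n i (j+1)) * h2
  calc (μ + lam) * ∑ k ∈ Finset.range n, wseq r (k+1) * psi n i (k+1)
      = ∑ j ∈ Finset.range n, ((μ + lam) * (wseq r (j+1) * psi n i (j+1))) := by
        rw [Finset.mul_sum]
    _ = ∑ j ∈ Finset.range n, (W (j+1) - W j) := Finset.sum_congr rfl htel
    _ = W n - W 0 := Finset.sum_range_sub W n
    _ = wseq r (n+1) * psi n i n := by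
        simp only [hW]
        have hpsi0 : psi n i 0 = 0 := by simp [psi]
        have hw0 : wseq r 0 = 0 := by simp [wseq]
        have hpsiN : psi n i (n+1) = 0 := by
          unfold psi
          have hN : ((n:ℝ)+1) ≠ 0 := by positivity
          rw [show (i:ℝ)*(((n:ℕ)+1 : ℕ):ℝ)*Real.pi/((n:ℝ)+1) = (i:ℝ)*Real.pi by
            push_cast; field_simp]
          exact Real.sin_nat_mul_pi i
        rw [hpsi0, hw0, hpsiN]
        ring

lemma tilde_closed (n : ℕ) (hn : 1 ≤ n) (lam r : ℝ) (hr : 1 < r) (hrr : r + r⁻¹ = 2 + lam) :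
    (2 / ((n:ℝ)+1)) * ∑ i ∈ Finset.Icc 1 n,
        Real.sin ((i:ℝ)*(n:ℝ)*Real.pi/((n:ℝ)+1))^2
          / (4*Real.sin ((i:ℝ)*Real.pi/(2*((n:ℝ)+1)))^2 + lam)
      = wseq r n / wseq r (n+1) := by
  have hr0 : (0:ℝ) < r := lt_trans one_pos hr
  have hinv : r * r⁻¹ = 1 := mul_inv_cancel₀ (ne_of_gt hr0)
  have hrinv : 0 < r⁻¹ := inv_pos.mpr hr0
  have hlam : 0 < lam := by nlinarith [sq_nonneg (r-1)]
  have hwpos : 0 < wseq r (n+1) := by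
    unfold wseq
    have h1 : r⁻¹ < r := by nlinarith
    have := pow_lt_pow_left₀ h1 (le_of_lt hrinv) (by omega : n+1 ≠ 0)
    linarith
  have hw0 : wseq r (n+1) ≠ 0 := ne_of_gt hwpos
  have hterm : ∀ i ∈ Finset.Icc 1 n,
      Real.sin ((i:ℝ)*(n:ℝ)*Real.pi/((n:ℝ)+1))^2
          / (4*Real.sin ((i:ℝ)*Real.pi/(2*((n:ℝ)+1)))^2 + lam)
        = (∑ k ∈ Finset.range n, wseq r (k+1) * (psi n i n * psi n i (k+1)))
            / wseq r (n+1) := by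
    intro i _
    have hk := key_sum n hn lam r hr hrr i
    have hμ : 0 < 4*Real.sin ((i:ℝ)*Real.pi/(2*((n:ℝ)+1)))^2 + lam := by positivity
    have hS : ∑ k ∈ Finset.range n, wseq r (k+1) * (psi n i n * psi n i (k+1))
        = psi n i n * ∑ k ∈ Finset.range n, wseq r (k+1) * psi n i (k+1) := by
      rw [Finset.mul_sum]
      exact Finset.sum_congr rfl (fun k _ => by ring)
    rw [hS]
    have hpsin : psi n i n = Real.sin ((i:ℝ)*(n:ℝ)*Real.pi/((n:ℝ)+1)) := rfl
    rw [← hpsin]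
    rw [div_eq_div_iff (ne_of_gt hμ) hw0]
    linear_combination (-(psi n i n)) * hk
  rw [Finset.sum_congr rfl hterm, ← Finset.sum_div]
  have hswap : ∑ i ∈ Finset.Icc 1 n, ∑ k ∈ Finset.range n,
        wseq r (k+1) * (psi n i n * psi n i (k+1))
      = ∑ k ∈ Finset.range n, ∑ i ∈ Finset.Icc 1 n,
        wseq r (k+1) * (psi n i n * psi n i (k+1)) := Finset.sum_comm
  rw [hswap]
  have hinner : ∀ k ∈ Finset.range n,
      ∑ i ∈ Finset.Icc 1 n, wseq r (k+1) * (psi n i n * psi n i (k+1))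
        = wseq r (k+1) * (if k+1 = n then ((n:ℝ)+1)/2 else 0) := by
    intro k hk
    rw [← Finset.mul_sum]
    congr 1
    have := orth n (k+1) hn (by omega) (by simp at hk; omega)
    exact this
  rw [Finset.sum_congr rfl hinner]
  have hsingle : ∑ k ∈ Finset.range n, wseq r (k+1) * (if k+1 = n then ((n:ℝ)+1)/2 else 0)
      = wseq r n * (((n:ℝ)+1)/2) := by
    rw [Finset.sum_eq_single_of_mem (n-1) (by simp; omega)]
    · rw [if_pos (by omega)]
      congr 2
      omega
    · intro b _ hb
      rw [if_neg (by omega), mul_zero]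
  rw [hsingle]
  have hN : ((n:ℝ)+1) ≠ 0 := by positivity
  field_simp

private lemma q_le_three (lam q : ℝ) (h1 : 0 < lam) (h2 : lam < 4) (h3 : 0 < q)
    (h4 : q^2 = lam + lam^2/4) : q ≤ 3 := by
  have H : 0 ≤ (4 - lam) * lam := mul_nonneg (by linarith) h1.le
  nlinarith [h4, H, h3]

private lemma numeric_Kr (h lam q : ℝ) (hhpos : 0 < h) (hhle : h ≤ 1/22)
    (hlam_pos : 0 < lam) (hlam_lt4 : lam < 4) (hq_pos : 0 < q) (hq3 : q ≤ 3)
    (hqlb : Real.pi*h - Real.pi^3*h^3/16 ≤ q) :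
    1 + 3*h + lam*(1-h)/2 ≤ (1 + lam/2 + q) * (1 - 7*h^2/16) := by
  have hπ := Real.pi_pos
  have hπlt : Real.pi < 3.15 := by linarith [Real.pi_lt_d2]
  have hπgt : 3.141592 < Real.pi := Real.pi_gt_d6
  have hh2 : h^2 ≤ h/22 := by
    have := mul_le_mul_of_nonneg_left hhle hhpos.le
    nlinarith [this]
  have hh3 : h^3 ≤ h/484 := by
    have h1 := mul_le_mul_of_nonneg_left hh2 hhpos.le
    nlinarith [h1, hh2]
  have hπ3 : Real.pi^3 < 32 := by
    have h1 : Real.pi^3 ≤ 3.15^3 := pow_le_pow_left₀ hπ.le hπlt.le 3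
    norm_num at h1
    linarith
  have hstep1 : (7*h^2/16)*(1+lam/2+q) ≤ 42*h^2/16 := by
    have hA : 1+lam/2+q ≤ 6 := by linarith
    have := mul_le_mul_of_nonneg_left hA (by positivity : (0:ℝ) ≤ 7*h^2/16)
    linarith
  have hstep2 : 3*h + 42*h^2/16 ≤ Real.pi*h - Real.pi^3*h^3/16 := by
    have e1 : 3.141592*h ≤ Real.pi*h := mul_le_mul_of_nonneg_right hπgt.le hhpos.le
    have e2 : Real.pi^3*h^3 ≤ 32*h^3 := mul_le_mul_of_nonneg_right hπ3.le (by positivity)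
    linarith
  linarith [hstep1, hstep2, hqlb, mul_nonneg hlam_pos.le hhpos.le]

set_option maxHeartbeats 1000000 in
/-- if `n ≥ 11` (with `h = 1/(2n)`), then for every `1 ≤ j ≤ 2n-1`
one has `3a_j - b_j < -7h²/16`; in particular `b_j > 3a_j + 7h²/16 > 0` and
`b_j/a_j > 3`. -/
theorem three_aj_sub_bj_bound (n : ℕ) (hn : 11 ≤ n) (h : ℝ)
    (hh : h = 1 / (2 * (n : ℝ)))
    (j : ℕ) (hj1 : 1 ≤ j) (hj2 : j ≤ 2 * n - 1) :
    3 * aRR n j - bRR n j < -7 * h ^ 2 / 16 ∧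
      bRR n j > 3 * aRR n j + 7 * h ^ 2 / 16 ∧
      3 * aRR n j + 7 * h ^ 2 / 16 > 0 ∧
      bRR n j / aRR n j > 3 := by
  have hπ := Real.pi_pos
  have hπlt : Real.pi < 3.15 := by linarith [Real.pi_lt_d2]
  have hn1 : (11:ℝ) ≤ (n:ℝ) := by exact_mod_cast hn
  have hnpos : (0:ℝ) < (n:ℝ) := by linarith
  have hhpos : 0 < h := by rw [hh]; positivity
  have hhle : h ≤ 1/22 := by
    rw [hh, div_le_div_iff₀ (by linarith) (by norm_num)]
    linarith
  have hj2' : (j:ℝ) ≤ 2*(n:ℝ) - 1 := by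
    have h1 : (j:ℕ) + 1 ≤ 2*n := by omega
    have h2 := (Nat.cast_le (α := ℝ)).mpr h1
    push_cast at h2
    linarith
  have hj1' : (1:ℝ) ≤ (j:ℝ) := by exact_mod_cast hj1
  set x : ℝ := (j:ℝ) * Real.pi / (4 * (n:ℝ)) with hxdef
  set y : ℝ := Real.pi / (4 * (n:ℝ)) with hydef
  have hy0 : 0 < y := by rw [hydef]; positivity
  have hyx : y ≤ x := by
    rw [hxdef, hydef, div_le_div_iff₀ (by linarith) (by linarith)]
    have H : 0 ≤ ((j:ℝ) - 1) * (Real.pi * (4*(n:ℝ))) :=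
      mul_nonneg (by linarith) (by positivity)
    linarith [H]
  have hxlt : x < Real.pi/2 := by
    rw [hxdef, div_lt_div_iff₀ (by linarith) (by norm_num)]
    have H : 0 ≤ (2*(n:ℝ) - 1 - (j:ℝ)) * (2*Real.pi) :=
      mul_nonneg (by linarith) (by positivity)
    linarith [H, hπ]
  have hx0 : 0 < x := lt_of_lt_of_le hy0 hyx
  set lam : ℝ := lamRR n j with hlamdef
  have hlam_eq : lam = 4 * Real.sin x ^ 2 := by
    rw [hlamdef, lamRR, ← hxdef]
  have hsinx_pos : 0 < Real.sin x := Real.sin_pos_of_pos_of_lt_pi hx0 (by linarith)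
  have hlam_pos : 0 < lam := by rw [hlam_eq]; positivity
  have hcosx_pos : 0 < Real.cos x := Real.cos_pos_of_mem_Ioo ⟨by linarith, hxlt⟩
  have hsincos := Real.sin_sq_add_cos_sq x
  have hlam_lt4 : lam < 4 := by
    rw [hlam_eq]
    have : 0 < Real.cos x ^ 2 := pow_pos hcosx_pos 2
    linarith
  have hsiny_le : Real.sin y ≤ Real.sin x := by
    apply Real.strictMonoOn_sin.monotoneOn ⟨by linarith, by linarith⟩
      ⟨by linarith, le_of_lt hxlt⟩ hyx
  have hylt : y < Real.pi := by
    rw [hydef, div_lt_iff₀ (by linarith)]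
    have H : 0 < Real.pi * (4*(n:ℝ) - 1) := mul_pos hπ (by linarith)
    linarith [H]
  have hsiny_pos : 0 < Real.sin y := Real.sin_pos_of_pos_of_lt_pi hy0 hylt
  have hlow : 4 * Real.sin y ^ 2 ≤ lam := by
    rw [hlam_eq]
    have := pow_le_pow_left₀ hsiny_pos.le hsiny_le 2
    linarith
  have hy_eq : y = Real.pi * h / 2 := by
    rw [hydef, hh, mul_one_div, div_div]
    congr 1
    ring
  have hy_le1 : y ≤ 1 := by
    rw [hy_eq]
    have e1 : Real.pi*h ≤ 3.15*h := mul_le_mul_of_nonneg_right hπlt.le hhpos.le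
    linarith
  have hsiny_cube : y - y^3/4 < Real.sin y := by
    have := Real.sin_gt_sub_cube hy0; have := pow_pos hy0 3; linarith
  set q : ℝ := Real.sqrt (lam + lam^2/4) with hqdef
  have hq2 : q^2 = lam + lam^2/4 := Real.sq_sqrt (by positivity)
  have hq_pos : 0 < q := Real.sqrt_pos.mpr (by positivity)
  set r : ℝ := 1 + lam/2 + q with hrdef
  have hr : 1 < r := by rw [hrdef]; linarith
  have hr0 : (0:ℝ) < r := by linarith
  have hmul : r * (1 + lam/2 - q) = 1 := by
    rw [hrdef]; linear_combination (-1 : ℝ) * hq2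
  have hrinv : r⁻¹ = 1 + lam/2 - q := inv_eq_of_mul_eq_one_right hmul
  have hrr : r + r⁻¹ = 2 + lam := by rw [hrinv, hrdef]; ring
  have htilde : lamTildeRR n j = wseq r n / wseq r (n+1) := by
    rw [lamTildeRR, ← hlamdef]
    exact tilde_closed n (by omega) lam r hr hrr
  have hrinv_pos : 0 < r⁻¹ := inv_pos.mpr hr0
  have hrinv_lt : r⁻¹ < r := by rw [hrinv, hrdef]; linarith
  have hwn_pos : 0 < wseq r n := by
    rw [wseq]
    have := pow_lt_pow_left₀ hrinv_lt (le_of_lt hrinv_pos) (by omega : n ≠ 0)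
    linarith
  have hwn1_pos : 0 < wseq r (n+1) := by
    rw [wseq]
    have := pow_lt_pow_left₀ hrinv_lt (le_of_lt hrinv_pos) (by omega : n+1 ≠ 0)
    linarith
  have htpos : 0 < lamTildeRR n j := by
    rw [htilde]; exact div_pos hwn_pos hwn1_pos
  have hrt : r * lamTildeRR n j < 1 := by
    rw [htilde, ← mul_div_assoc, div_lt_one hwn1_pos]
    simp only [wseq, pow_succ]
    have hp : 0 < r⁻¹^n := pow_pos hrinv_pos n
    have H := mul_lt_mul_of_pos_left hrinv_lt hp
    linarith [H]
  have hq3 : q ≤ 3 := q_le_three lam q hlam_pos hlam_lt4 hq_pos hq2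
  have hsqlam : 2 * Real.sin y ≤ q := by
    have h1 : (2 * Real.sin y)^2 ≤ lam + lam^2/4 := by
      have e : (2*Real.sin y)^2 = 4*Real.sin y^2 := by ring
      have := sq_nonneg lam
      linarith
    have h2 := Real.sqrt_le_sqrt h1
    rwa [Real.sqrt_sq (by positivity), ← hqdef] at h2
  have hqlb : Real.pi * h - Real.pi^3 * h^3/16 ≤ q := by
    have he : Real.pi * h - Real.pi^3 * h^3/16 = 2 * (y - y^3/4) := by
      rw [hy_eq]; ring
    linarith
  have hKr : 1 + 3*h + lam*(1-h)/2 ≤ r * (1 - 7*h^2/16) := by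
    rw [hrdef]
    exact numeric_Kr h lam q hhpos hhle hlam_pos hlam_lt4 hq_pos hq3 hqlb
  have hab : 3 * aRR n j - bRR n j
      = (1 + 3*h + lam*(1-h)/2) * lamTildeRR n j - 1 := by
    rw [aRR, bRR, ← hlamdef, hh]
    ring
  have hh2 : h^2 ≤ h/22 := by
    have := mul_le_mul_of_nonneg_left hhle hhpos.le
    linarith [this]
  have hmain : 3 * aRR n j - bRR n j < -7 * h^2 / 16 := by
    rw [hab]
    have h1 : (1 + 3*h + lam*(1-h)/2) * lamTildeRR n j
        ≤ (r * (1 - 7*h^2/16)) * lamTildeRR n j :=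
      mul_le_mul_of_nonneg_right hKr (le_of_lt htpos)
    have hpos1 : (0:ℝ) < 1 - 7*h^2/16 := by linarith
    have h2 : (r * (1 - 7*h^2/16)) * lamTildeRR n j
        = (1 - 7*h^2/16) * (r * lamTildeRR n j) := by ring
    have h3 := mul_lt_mul_of_pos_left hrt hpos1
    linarith [h1, h2, h3]
  have heps : (0:ℝ) < 7*h^2/16 := by positivity
  have hapos : 0 < aRR n j := by
    rw [aRR, ← hlamdef, ← hh]
    have hfac : 0 < h - h/6*lam := by
      have := mul_pos hhpos (show (0:ℝ) < 6 - lam by linarith)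
      linarith
    exact mul_pos hfac htpos
  refine ⟨hmain, by linarith, by linarith, ?_⟩
  rw [gt_iff_lt, lt_div_iff₀ hapos]
  linarith
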